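/- Let A and B be bounded linear operators on H. Then η(A + B) ≤ η(A) + η(B) + ber(A*B + B*A). -/

import Mathlib

open scoped InnerProductSpace
open ContinuousLinearMap

variable {H : Type*} [NormedAddCommGroup H] [InnerProductSpace ℂ H] [CompleteSpace H]
variable {Ω : Type*} [Nonempty Ω]

/-- Berezin number: `ber(T) = sup_{λ∈Ω} |⟨T k̂_λ, k̂_λ⟩|`. -/
noncomputable def ber (k : Ω → H) (T : H →L[ℂ] H) : ℝ :=
  ⨆ lam : Ω, ‖⟪T (k lam), k lam⟫_ℂ‖

/-- Berezin norm: `‖T‖_ber = sup_{λ,μ∈Ω} |⟨T k̂_λ, k̂_μ⟩|`. -/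
noncomputable def bernorm (k : Ω → H) (T : H →L[ℂ] H) : ℝ :=
  ⨆ p : Ω × Ω, ‖⟪T (k p.1), k p.2⟫_ℂ‖

/-- Least Berezin number: `c(T) = inf_{λ∈Ω} |⟨T k̂_λ, k̂_λ⟩|`. -/
noncomputable def lber (k : Ω → H) (T : H →L[ℂ] H) : ℝ :=
  ⨅ lam : Ω, ‖⟪T (k lam), k lam⟫_ℂ‖

/-- Davis-Wielandt-Berezin radius: `η(T) = sup_{λ∈Ω} √(|⟨T k̂_λ, k̂_λ⟩|² + ‖T k̂_λ‖⁴)`. -/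
noncomputable def eta (k : Ω → H) (T : H →L[ℂ] H) : ℝ :=
  ⨆ lam : Ω, Real.sqrt (‖⟪T (k lam), k lam⟫_ℂ‖ ^ 2 + ‖T (k lam)‖ ^ 4)

/-- The modulus `|A| = (A*A)^{1/2}`. -/
noncomputable def absop (A : H →L[ℂ] H) : H →L[ℂ] H := CFC.sqrt (adjoint A * A)



lemma key_aux (a b p q r x y : ℝ) (ha : 0 ≤ a) (hb : 0 ≤ b) (hp : 0 ≤ p) (hq : 0 ≤ q)
    (hr : 0 ≤ r) (hx : 0 ≤ x) (hy : 0 ≤ y) (h1 : x ≤ a + b) (h2 : y ≤ p + q + r) :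
    Real.sqrt (x ^ 2 + y ^ 2) ≤ Real.sqrt (a ^ 2 + p ^ 2) + Real.sqrt (b ^ 2 + q ^ 2) + r := by
  set u := Real.sqrt (a ^ 2 + p ^ 2) with hu
  set v := Real.sqrt (b ^ 2 + q ^ 2) with hv
  have hu0 : 0 ≤ u := Real.sqrt_nonneg _
  have hv0 : 0 ≤ v := Real.sqrt_nonneg _
  have hu2 : u ^ 2 = a ^ 2 + p ^ 2 := Real.sq_sqrt (by positivity)
  have hv2 : v ^ 2 = b ^ 2 + q ^ 2 := Real.sq_sqrt (by positivity)
  have hau : a ≤ u := by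
    rw [hu]; nlinarith [Real.sq_sqrt (show (0:ℝ) ≤ a^2+p^2 by positivity), Real.sqrt_nonneg (a^2+p^2), sq_nonneg (Real.sqrt (a^2+p^2) - a)]
  have hpu : p ≤ u := by
    rw [hu]; nlinarith [Real.sq_sqrt (show (0:ℝ) ≤ a^2+p^2 by positivity), Real.sqrt_nonneg (a^2+p^2), sq_nonneg (Real.sqrt (a^2+p^2) - p)]
  have hbv : b ≤ v := by
    rw [hv]; nlinarith [Real.sq_sqrt (show (0:ℝ) ≤ b^2+q^2 by positivity), Real.sqrt_nonneg (b^2+q^2), sq_nonneg (Real.sqrt (b^2+q^2) - b)]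
  have hqv : q ≤ v := by
    rw [hv]; nlinarith [Real.sq_sqrt (show (0:ℝ) ≤ b^2+q^2 by positivity), Real.sqrt_nonneg (b^2+q^2), sq_nonneg (Real.sqrt (b^2+q^2) - q)]
  have hcs : a * b + p * q ≤ u * v := by
    nlinarith [sq_nonneg (a * q - p * b), mul_nonneg hu0 hv0,
      sq_nonneg (u * v - a * b - p * q), mul_nonneg (mul_nonneg ha hb) (mul_nonneg hp hq)]
  have hmain : x ^ 2 + y ^ 2 ≤ (u + v + r) ^ 2 := by
    nlinarith [mul_nonneg hx hy, mul_nonneg ha hb, mul_nonneg hp hq]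
  calc Real.sqrt (x ^ 2 + y ^ 2) ≤ Real.sqrt ((u + v + r) ^ 2) := Real.sqrt_le_sqrt hmain
    _ = u + v + r := Real.sqrt_sq (by positivity)

lemma eta_bdd (k : Ω → H) (hk : ∀ lam, ‖k lam‖ = 1) (T : H →L[ℂ] H) :
    BddAbove (Set.range fun lam =>
      Real.sqrt (‖⟪T (k lam), k lam⟫_ℂ‖ ^ 2 + ‖T (k lam)‖ ^ 4)) := by
  refine ⟨Real.sqrt (‖T‖ ^ 2 + ‖T‖ ^ 4), ?_⟩
  rintro _ ⟨lam, rfl⟩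
  have h1 : ‖⟪T (k lam), k lam⟫_ℂ‖ ≤ ‖T‖ := by
    calc ‖⟪T (k lam), k lam⟫_ℂ‖ ≤ ‖T (k lam)‖ * ‖k lam‖ := norm_inner_le_norm _ _
      _ ≤ ‖T‖ * ‖k lam‖ * ‖k lam‖ := by
          have := T.le_opNorm (k lam); rw [hk] at this ⊢
          simpa [hk] using this
      _ ≤ ‖T‖ := by rw [hk]; ring_nf; rfl
  have h2 : ‖T (k lam)‖ ≤ ‖T‖ := by
    have := T.le_opNorm (k lam); rwa [hk, mul_one] at this
  apply Real.sqrt_le_sqrt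
  have h0 : 0 ≤ ‖⟪T (k lam), k lam⟫_ℂ‖ := norm_nonneg _
  have h0' : 0 ≤ ‖T (k lam)‖ := norm_nonneg _
  nlinarith [pow_le_pow_left₀ h0 h1 2, pow_le_pow_left₀ h0' h2 4]

lemma ber_bdd (k : Ω → H) (hk : ∀ lam, ‖k lam‖ = 1) (T : H →L[ℂ] H) :
    BddAbove (Set.range fun lam => ‖⟪T (k lam), k lam⟫_ℂ‖) := by
  refine ⟨‖T‖, ?_⟩
  rintro _ ⟨lam, rfl⟩
  calc ‖⟪T (k lam), k lam⟫_ℂ‖ ≤ ‖T (k lam)‖ * ‖k lam‖ := norm_inner_le_norm _ _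
    _ ≤ ‖T‖ * ‖k lam‖ * ‖k lam‖ := by
        have := T.le_opNorm (k lam)
        exact mul_le_mul_of_nonneg_right this (norm_nonneg _)
    _ = ‖T‖ := by rw [hk]; ring


theorem stmt19 (k : Ω → H) (hk : ∀ lam, ‖k lam‖ = 1) (A B : H →L[ℂ] H) :
    eta k (A + B) ≤ eta k A + eta k B + ber k (adjoint A * B + adjoint B * A) := by
  unfold eta ber
  apply ciSup_le
  intro lam
  set x := k lam with hxdef
  have hx : ‖x‖ = 1 := hk lam
  set a := ‖⟪A x, x⟫_ℂ‖
  set b := ‖⟪B x, x⟫_ℂ‖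
  set p := ‖A x‖ ^ 2 with hpdef
  set q := ‖B x‖ ^ 2 with hqdef
  set r := ‖⟪(adjoint A * B + adjoint B * A) x, x⟫_ℂ‖ with hrdef
  have hs : ‖⟪(A + B) x, x⟫_ℂ‖ ≤ a + b := by
    rw [ContinuousLinearMap.add_apply, inner_add_left]
    exact norm_add_le _ _
  have ht : ‖(A + B) x‖ ^ 2 ≤ p + q + r := by
    rw [ContinuousLinearMap.add_apply]
    have hinner : ⟪(adjoint A * B + adjoint B * A) x, x⟫_ℂ =
        ⟪A x, B x⟫_ℂ + (starRingEnd ℂ) ⟪A x, B x⟫_ℂ := by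
      simp only [ContinuousLinearMap.add_apply, ContinuousLinearMap.mul_apply, inner_add_left,
        adjoint_inner_left]
      rw [← inner_conj_symm (B x) (A x)]
      ring
    have hre : (2 : ℝ) * (⟪A x, B x⟫_ℂ).re ≤ r := by
      rw [hrdef, hinner]
      have : ⟪A x, B x⟫_ℂ + (starRingEnd ℂ) ⟪A x, B x⟫_ℂ = ((2 * (⟪A x, B x⟫_ℂ).re : ℝ) : ℂ) := by
        rw [Complex.add_conj]
      rw [this, Complex.norm_real]
      exact le_abs_self _
    have hnorm : ‖A x + B x‖ ^ 2 = p + q + 2 * (⟪A x, B x⟫_ℂ).re := by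
      rw [hpdef, hqdef, @norm_add_sq ℂ]
      simp [RCLike.re_to_complex]
      try ring
    linarith [hnorm, hre]
  have key := key_aux a b p q r ‖⟪(A + B) x, x⟫_ℂ‖ (‖(A + B) x‖ ^ 2)
    (norm_nonneg _) (norm_nonneg _) (by positivity) (by positivity) (norm_nonneg _)
    (norm_nonneg _) (by positivity) hs ht
  have heq : ‖(A + B) x‖ ^ 4 = (‖(A + B) x‖ ^ 2) ^ 2 := by ring
  rw [heq]
  have hA : Real.sqrt (a ^ 2 + p ^ 2) ≤
      ⨆ lam : Ω, Real.sqrt (‖⟪A (k lam), k lam⟫_ℂ‖ ^ 2 + ‖A (k lam)‖ ^ 4) := by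
    have := le_ciSup (eta_bdd k hk A) lam
    show Real.sqrt (‖⟪A x, x⟫_ℂ‖ ^ 2 + (‖A x‖ ^ 2) ^ 2) ≤ _
    rw [← pow_mul]; exact this
  have hB : Real.sqrt (b ^ 2 + q ^ 2) ≤
      ⨆ lam : Ω, Real.sqrt (‖⟪B (k lam), k lam⟫_ℂ‖ ^ 2 + ‖B (k lam)‖ ^ 4) := by
    have := le_ciSup (eta_bdd k hk B) lam
    show Real.sqrt (‖⟪B x, x⟫_ℂ‖ ^ 2 + (‖B x‖ ^ 2) ^ 2) ≤ _
    rw [← pow_mul]; exact this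
  have hC : r ≤ ⨆ lam : Ω, ‖⟪(adjoint A * B + adjoint B * A) (k lam), k lam⟫_ℂ‖ :=
    le_ciSup (ber_bdd k hk _) lam
  linarith [key]
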